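/- With 0 ≤ d < 1 and every vertex of outdegree at least 1, the PageRank map F has a unique fixed point in the probability simplex. -/

import Mathlib

open Finset Filter

/-- In-neighbors of `i`. -/
def inlink {n : ℕ} (E : Fin n → Fin n → Prop) [DecidableRel E] (i : Fin n) : Finset (Fin n) :=
  Finset.univ.filter (fun j => E j i)

/-- Out-degree of `j`. -/
def outdeg {n : ℕ} (E : Fin n → Fin n → Prop) [DecidableRel E] (j : Fin n) : ℕ :=
  (Finset.univ.filter (fun i => E j i)).card

/-- The Jacobi (power-iteration) PageRank update map. -/
noncomputable def Fpr {n : ℕ} (E : Fin n → Fin n → Prop) [DecidableRel E] (d : ℝ)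
    (x : Fin n → ℝ) (i : Fin n) : ℝ :=
  (1 - d) / n + d * ∑ j ∈ inlink E i, x j / (outdeg E j : ℝ)

/-- Right-hand side of the Gauss–Seidel PageRank update at node `i`,
where `g` denotes the already-updated values. -/
noncomputable def gsRHS {n : ℕ} (E : Fin n → Fin n → Prop) [DecidableRel E] (d : ℝ)
    (g : Fin n → ℝ) (x : Fin n → ℝ) (i : Fin n) : ℝ :=
  (1 - d) / n + d * ((∑ j ∈ (inlink E i).filter (fun j => i ≤ j), x j / (outdeg E j : ℝ)) +
    ∑ j ∈ (inlink E i).filter (fun j => j < i), g j / (outdeg E j : ℝ))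

lemma sum_inlink_swap {n : ℕ} (E : Fin n → Fin n → Prop) [DecidableRel E] (g : Fin n → ℝ) :
    ∑ i, ∑ j ∈ inlink E i, g j = ∑ j, (outdeg E j : ℝ) * g j := by
  simp only [inlink, Finset.sum_filter]
  rw [Finset.sum_comm]
  refine Finset.sum_congr rfl fun j _ => ?_
  rw [← Finset.sum_filter, Finset.sum_const, outdeg, nsmul_eq_mul]

lemma fpr_contract {n : ℕ} (E : Fin n → Fin n → Prop) [DecidableRel E]
    (d : ℝ) (hd0 : 0 ≤ d) (hout : ∀ j, 1 ≤ outdeg E j) (x y : Fin n → ℝ) :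
    ∑ i, |Fpr E d x i - Fpr E d y i| ≤ d * ∑ i, |x i - y i| := by
  have key : ∀ i, |Fpr E d x i - Fpr E d y i|
      ≤ d * ∑ j ∈ inlink E i, |x j - y j| / (outdeg E j : ℝ) := by
    intro i
    have : Fpr E d x i - Fpr E d y i
        = d * ∑ j ∈ inlink E i, (x j - y j) / (outdeg E j : ℝ) := by
      simp only [Fpr, sub_div, Finset.sum_sub_distrib]
      ring
    rw [this, abs_mul, abs_of_nonneg hd0]
    gcongr
    refine (Finset.abs_sum_le_sum_abs _ _).trans ?_
    refine Finset.sum_le_sum fun j _ => ?_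
    rw [abs_div, abs_of_nonneg (by positivity : (0:ℝ) ≤ (outdeg E j : ℝ))]
  calc ∑ i, |Fpr E d x i - Fpr E d y i|
      ≤ ∑ i, d * ∑ j ∈ inlink E i, |x j - y j| / (outdeg E j : ℝ) :=
        Finset.sum_le_sum fun i _ => key i
    _ = d * ∑ i, ∑ j ∈ inlink E i, |x j - y j| / (outdeg E j : ℝ) := by
        rw [Finset.mul_sum]
    _ = d * ∑ j, (outdeg E j : ℝ) * (|x j - y j| / (outdeg E j : ℝ)) := by
        rw [sum_inlink_swap]
    _ = d * ∑ j, |x j - y j| := by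
        congr 1
        refine Finset.sum_congr rfl fun j _ => ?_
        have hj : (outdeg E j : ℝ) ≠ 0 :=
          Nat.cast_ne_zero.mpr (Nat.one_le_iff_ne_zero.mp (hout j))
        field_simp

lemma fpr_sum {n : ℕ} (hn : 0 < n) (E : Fin n → Fin n → Prop) [DecidableRel E]
    (d : ℝ) (hout : ∀ j, 1 ≤ outdeg E j) (x : Fin n → ℝ) :
    ∑ i, Fpr E d x i = (1 - d) + d * ∑ j, x j := by
  simp only [Fpr, Finset.sum_add_distrib, Finset.sum_const, Finset.card_univ, Fintype.card_fin,
    nsmul_eq_mul, ← Finset.mul_sum]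
  rw [sum_inlink_swap]
  have h1 : (n : ℝ) * ((1 - d) / n) = 1 - d := by
    field_simp
  rw [h1]
  congr 1
  congr 1
  refine Finset.sum_congr rfl fun j _ => ?_
  have hj : (outdeg E j : ℝ) ≠ 0 :=
    Nat.cast_ne_zero.mpr (Nat.one_le_iff_ne_zero.mp (hout j))
  field_simp

/-- The PageRank map has a unique fixed point in the probability simplex. -/
theorem pagerank_unique_fixed_point {n : ℕ} (hn : 0 < n)
    (E : Fin n → Fin n → Prop) [DecidableRel E]
    (d : ℝ) (hd0 : 0 ≤ d) (hd1 : d < 1) (hout : ∀ j, 1 ≤ outdeg E j) :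
    ∃! x : Fin n → ℝ, (∀ i, 0 ≤ x i) ∧ (∑ i, x i = 1) ∧ Fpr E d x = x := by
  classical
  let X := PiLp 1 (fun _ : Fin n => ℝ)
  let f : X → X := fun x => WithLp.toLp 1 (Fpr E d x)
  have hdist : ∀ x y : X, dist x y = ∑ i, |x i - y i| := by
    intro x y
    rw [PiLp.dist_eq_sum (by norm_num : (0:ℝ) < (1 : ENNReal).toReal)]
    simp [Real.dist_eq]
  have hlip : LipschitzWith ⟨d, hd0⟩ f := by
    refine LipschitzWith.of_dist_le_mul fun x y => ?_
    rw [hdist, hdist]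
    exact fpr_contract E d hd0 hout x y
  have hcw : ContractingWith ⟨d, hd0⟩ f := ⟨by exact_mod_cast hd1, hlip⟩
  have : Nonempty X := ⟨0⟩
  set x0 : X := hcw.fixedPoint f with hx0
  have hfix : Function.IsFixedPt f x0 := hcw.fixedPoint_isFixedPt
  -- nonnegativity preserved
  have hpres : ∀ x : X, (∀ i, 0 ≤ x i) → ∀ i, 0 ≤ f x i := by
    intro x hx i
    have h1 : (0:ℝ) ≤ (1 - d) / n := by
      have hn' : (0:ℝ) < n := by exact_mod_cast hn
      have h1d : (0:ℝ) ≤ 1 - d := by linarith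
      positivity
    have h2 : (0:ℝ) ≤ ∑ j ∈ inlink E i, x j / (outdeg E j : ℝ) :=
      Finset.sum_nonneg fun j _ => div_nonneg (hx j) (by positivity)
    have : f x i = (1 - d) / n + d * ∑ j ∈ inlink E i, x j / (outdeg E j : ℝ) := rfl
    rw [this]; exact add_nonneg h1 (mul_nonneg hd0 h2)
  have hiter : ∀ k : ℕ, ∀ i, 0 ≤ (f^[k] (0 : X)) i := by
    intro k
    induction k with
    | zero => intro i; exact le_of_eq rfl
    | succ k ih =>
      intro i
      rw [Function.iterate_succ_apply']
      exact hpres _ ih i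
  have hnonneg : ∀ i, 0 ≤ x0 i := by
    intro i
    have htend : Tendsto (fun k => (f^[k] (0:X)) i) atTop (nhds (x0 i)) := by
      have h1 : Tendsto (fun k => f^[k] (0:X)) atTop (nhds x0) :=
        hcw.tendsto_iterate_fixedPoint 0
      have h2 : Continuous fun x : X => x i :=
        (continuous_apply i).comp (PiLp.continuous_ofLp 1 (fun _ : Fin n => ℝ))
      exact (h2.tendsto x0).comp h1
    exact ge_of_tendsto htend (Filter.Eventually.of_forall fun k => hiter k i)
  have hfixEq : Fpr E d x0 = x0 := congrArg WithLp.ofLp hfix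
  have hsum : ∑ i, x0 i = 1 := by
    have h := fpr_sum hn E d hout x0
    rw [hfixEq] at h
    have hne : (1 : ℝ) - d ≠ 0 := by linarith
    have h2 : (1 - d) * ∑ i, x0 i = (1 - d) * 1 := by linarith
    exact mul_left_cancel₀ hne h2
  refine ⟨x0, ⟨hnonneg, hsum, hfixEq⟩, ?_⟩
  rintro y ⟨-, -, hy⟩
  exact congrArg WithLp.ofLp
    (hcw.fixedPoint_unique (x := WithLp.toLp 1 y) (congrArg (WithLp.toLp 1) hy))
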